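/- For all c, d, h in G, (c ◁ d) ◁ h = c ◁ ((d ◁ h) · h). Equivalently, defining the Grossman–Larson product c ⋆ d := (c ◁ d) · d, the right action maps satisfy R_h ∘ R_d = R_{d ⋆ h}. -/

import Mathlib

/-- Words over the alphabet X = {x₀, x₁}, encoded as lists of booleans
(`false` ↔ x₀, `true` ↔ x₁). -/
abbrev Word : Type := List Bool

/-- Noncommutative formal power series over X with real coefficients. -/
abbrev Series : Type := Word → ℝ

/-- Auxiliary recursion computing the coefficient of the shuffle product. -/
def sh : Word → Series → Series → ℝ
  | [], c, d => c [] * d []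
  | a :: w, c, d => sh w (fun u => c (a :: u)) d + sh w c (fun u => d (a :: u))

/-- The shuffle product of two series. -/
def shuffle (c d : Series) : Series := fun w => sh w c d

/-- Left concatenation by the letter x₀. -/
def X0f (c : Series) : Series := fun w =>
  match w with
  | false :: w' => c w'
  | _ => 0

/-- Left concatenation by the letter x₁. -/
def X1f (c : Series) : Series := fun w =>
  match w with
  | true :: w' => c w'
  | _ => 0

/-- The indicator series of a word. -/
def deltaW (η : Word) : Series := fun w => if w = η then 1 else 0

/-- The shuffle unit 1∅. -/
def oneS : Series := deltaW []

/-- Mixed composition product of a word with a pair of series: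
∅ ∘̃ z = ∅, (x₀η) ∘̃ z = x₀(η ∘̃ z),
(x₁η) ∘̃ z = x₁(z₁ ⧢ (η ∘̃ z)) + x₀(z₂ ⧢ (η ∘̃ z)). -/
def wmix : Word → Series × Series → Series
  | [], _ => oneS
  | false :: η, z => X0f (wmix η z)
  | true :: η, z => X1f (shuffle z.1 (wmix η z)) + X0f (shuffle z.2 (wmix η z))

/-- Mixed composition product `c ∘̃ z`, extended linearly in the left argument.
(Since `wmix η z` vanishes on words shorter than `η`, the sum may be truncated.) -/
def mixcomp (c : Series) (z : Series × Series) : Series := fun w =>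
  ∑ n ∈ Finset.range (w.length + 1), ∑ f : Fin n → Bool,
    c (List.ofFn f) * wmix (List.ofFn f) z w

/-- Composition product of a word with a series:
∅ ∘ d = ∅, (x₀η) ∘ d = x₀(η ∘ d), (x₁η) ∘ d = x₀(d ⧢ (η ∘ d)). -/
def wcomp : Word → Series → Series
  | [], _ => oneS
  | false :: η, d => X0f (wcomp η d)
  | true :: η, d => X0f (shuffle d (wcomp η d))

/-- Composition product `c ∘ d`, extended linearly in the left argument. -/
def compP (c d : Series) : Series := fun w =>
  ∑ n ∈ Finset.range (w.length + 1), ∑ f : Fin n → Bool,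
    c (List.ofFn f) * wcomp (List.ofFn f) d w

/-- The group product on G: (c₁,c₂)·(d₁,d₂) = (c₁ ⧢ d₁, c₂ + c₁ ⧢ d₂). -/
def gmul (c d : Series × Series) : Series × Series :=
  (shuffle c.1 d.1, c.2 + shuffle c.1 d.2)

/-- The identity element e = (1∅, 0) of G. -/
def geId : Series × Series := (oneS, 0)

/-- Shuffle powers. -/
def shPow (c : Series) : ℕ → Series
  | 0 => oneS
  | n + 1 => shuffle c (shPow c n)

/-- Shuffle inverse of a series with constant coefficient 1, via the
geometric series c^{⧢ -1} = Σ_k (1∅ - c)^{⧢ k} (truncated by word length,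
which is exact since 1∅ - c is proper). -/
def shInv (c : Series) : Series := fun w =>
  ∑ k ∈ Finset.range (w.length + 1), shPow (oneS - c) k w

/-- The group inverse in (G,·). -/
def ginv (c : Series × Series) : Series × Series :=
  (shInv c.1, -(shuffle (shInv c.1) c.2))

/-- The product ◁ on G, componentwise mixed composition. -/
def triOp (c d : Series × Series) : Series × Series :=
  (mixcomp c.1 d, mixcomp c.2 d)

/-- The Grossman–Larson product c ⋆ d = (c ◁ d) · d. -/
def starOp (c d : Series × Series) : Series × Series := gmul (triOp c d) d
section ShuffleAlg

lemma sh_zero_right (w : Word) (c : Series) : sh w c 0 = 0 := by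
  induction w generalizing c with
  | nil => simp [sh]
  | cons a w ih =>
      rw [show sh (a :: w) c 0 = sh w (fun u => c (a :: u)) 0 + sh w c 0 from rfl,
        ih, ih, add_zero]

lemma sh_zero_left (w : Word) (c : Series) : sh w 0 c = 0 := by
  induction w generalizing c with
  | nil => simp [sh]
  | cons a w ih =>
      rw [show sh (a :: w) 0 c = sh w 0 c + sh w 0 (fun u => c (a :: u)) from rfl,
        ih, ih, add_zero]

lemma sh_add_right (w : Word) (c d e : Series) :
    sh w c (d + e) = sh w c d + sh w c e := by
  induction w generalizing c d e with
  | nil => simp [sh]; ring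
  | cons a w ih =>
      show sh w _ (d + e) + sh w c (fun u => (d + e) (a :: u)) = _
      have : (fun u => (d + e) (a :: u)) =
          (fun u => d (a :: u)) + (fun u => e (a :: u)) := rfl
      rw [this, ih, ih]
      simp [sh]; ring

lemma sh_smul_right (w : Word) (r : ℝ) (c d : Series) :
    sh w c (fun u => r * d u) = r * sh w c d := by
  induction w generalizing c d with
  | nil => simp [sh]; ring
  | cons a w ih =>
      show sh w _ (fun u => r * d u) + sh w c (fun u => r * d (a :: u)) = _
      rw [ih (fun u => c (a :: u)) d, ih c (fun u => d (a :: u))]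
      simp [sh]; ring

lemma sh_comm (w : Word) (c d : Series) : sh w c d = sh w d c := by
  induction w generalizing c d with
  | nil => simp [sh]; ring
  | cons a w ih =>
      simp only [sh]
      rw [ih (fun u => c (a :: u)) d, ih c (fun u => d (a :: u))]
      ring

lemma shuffle_comm (c d : Series) : shuffle c d = shuffle d c :=
  funext fun w => sh_comm w c d

lemma sh_assoc (w : Word) (a b c : Series) :
    sh w (shuffle a b) c = sh w a (shuffle b c) := by
  induction w generalizing a b c with
  | nil => simp [sh, shuffle]; ring
  | cons x w ih =>
      show sh w (fun u => shuffle a b (x :: u)) c + sh w (shuffle a b) (fun u => c (x :: u)) = _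
      have h1 : (fun u => shuffle a b (x :: u)) =
          shuffle (fun v => a (x :: v)) b + shuffle a (fun v => b (x :: v)) := rfl
      have h2 : (fun u => shuffle b c (x :: u)) =
          shuffle (fun v => b (x :: v)) c + shuffle b (fun v => c (x :: v)) := rfl
      rw [h1]
      have hadd : sh w (shuffle (fun v => a (x :: v)) b + shuffle a (fun v => b (x :: v))) c
          = sh w (shuffle (fun v => a (x :: v)) b) c + sh w (shuffle a (fun v => b (x :: v))) c := by
        rw [sh_comm, sh_add_right, sh_comm _ c, sh_comm _ c]
      rw [hadd, ih, ih, ih]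
      show _ = sh w (fun u => a (x :: u)) (shuffle b c) + sh w a (fun u => shuffle b c (x :: u))
      rw [h2, sh_add_right]
      ring

lemma shuffle_assoc (a b c : Series) :
    shuffle (shuffle a b) c = shuffle a (shuffle b c) :=
  funext fun w => sh_assoc w a b c

lemma sh_congr_right (w : Word) (c X Y : Series)
    (h : ∀ u : Word, u.length ≤ w.length → X u = Y u) : sh w c X = sh w c Y := by
  induction w generalizing c X Y with
  | nil => simp [sh, h [] (by simp)]
  | cons a w ih =>
      simp only [sh]
      rw [ih _ X Y (fun u hu => h u (by simpa using Nat.le_succ_of_le hu)),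
        ih c (fun u => X (a :: u)) (fun u => Y (a :: u))
          (fun u hu => h (a :: u) (by simpa using hu))]

lemma sh_sum_right {ι : Type*} (w : Word) (c : Series) (s : Finset ι) (F : ι → Series) :
    sh w c (fun u => ∑ i ∈ s, F i u) = ∑ i ∈ s, sh w c (F i) := by
  classical
  induction s using Finset.induction with
  | empty => exact sh_zero_right w c
  | insert j t hx ih =>
      have : (fun u => ∑ i ∈ insert j t, F i u) = F j + fun u => ∑ i ∈ t, F i u := by
        funext u; simp [Finset.sum_insert hx]
      rw [this, sh_add_right, ih, Finset.sum_insert hx]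

end ShuffleAlg
section MixcompStruct

lemma sum_fun_succ (n : ℕ) (F : (Fin (n + 1) → Bool) → ℝ) :
    ∑ f : Fin (n + 1) → Bool, F f =
      (∑ g : Fin n → Bool, F (Fin.cons true g)) +
      ∑ g : Fin n → Bool, F (Fin.cons false g) := by
  rw [← Equiv.sum_comp (Fin.consEquiv fun _ => Bool) F, Fintype.sum_prod_type,
    Fintype.sum_bool]
  rfl

lemma ofFn_cons (n : ℕ) (b : Bool) (g : Fin n → Bool) :
    List.ofFn (Fin.cons b g) = b :: List.ofFn g := by
  simp [List.ofFn_succ]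

lemma wmix_eq_zero (η : Word) (z : Series × Series) :
    ∀ w : Word, w.length < η.length → wmix η z w = 0 := by
  induction η with
  | nil => intro w hw; simp at hw
  | cons b η ih =>
      intro w hw
      match w with
      | [] => cases b <;> simp [wmix, X0f, X1f]
      | a :: w' =>
          have hw' : w'.length < η.length := by simpa using hw
          have hz : ∀ (x : Series), sh w' x (wmix η z) = 0 := by
            intro x
            rw [sh_congr_right w' x (wmix η z) 0
              (fun u hu => ih u (lt_of_le_of_lt hu hw')), sh_zero_right]
          cases b <;> cases a <;>
            simp [wmix, X0f, X1f, shuffle, ih w' hw', hz]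

lemma mixcomp_eq_sum (c : Series) (z : Series × Series) (w : Word) (N : ℕ)
    (hN : w.length ≤ N) :
    mixcomp c z w = ∑ n ∈ Finset.range (N + 1), ∑ f : Fin n → Bool,
      c (List.ofFn f) * wmix (List.ofFn f) z w := by
  show (∑ n ∈ Finset.range (w.length + 1), ∑ f : Fin n → Bool,
      c (List.ofFn f) * wmix (List.ofFn f) z w) = _
  apply Finset.sum_subset (Finset.range_subset_range.2 (by omega))
  intro n hn hn'
  apply Finset.sum_eq_zero
  intro f _
  rw [wmix_eq_zero, mul_zero]
  simp only [Finset.mem_range, not_lt] at hn'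
  simpa using hn'

lemma mixcomp_nil (c : Series) (z : Series × Series) : mixcomp c z [] = c [] := by
  simp [mixcomp, wmix, oneS, deltaW]

lemma mixcomp_zero (z : Series × Series) : mixcomp 0 z = 0 := by
  funext w; simp [mixcomp]

lemma mixcomp_add (a b : Series) (z : Series × Series) :
    mixcomp (a + b) z = mixcomp a z + mixcomp b z := by
  funext w
  simp [mixcomp, add_mul, Finset.sum_add_distrib]

lemma mixcomp_cons_false (c : Series) (z : Series × Series) (w : Word) :
    mixcomp c z (false :: w) =
      mixcomp (fun u => c (false :: u)) z w +
      sh w z.2 (mixcomp (fun u => c (true :: u)) z) := by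
  have hzero : ∀ u : Word, u.length ≤ w.length →
      mixcomp (fun v => c (true :: v)) z u =
      ∑ n ∈ Finset.range (w.length + 1), ∑ g : Fin n → Bool,
        c (true :: List.ofFn g) * wmix (List.ofFn g) z u := by
    intro u hu
    exact mixcomp_eq_sum _ z u w.length hu
  rw [sh_congr_right w z.2 _ _ hzero]
  show (∑ n ∈ Finset.range (w.length + 1 + 1), ∑ f : Fin n → Bool,
      c (List.ofFn f) * wmix (List.ofFn f) z (false :: w)) = _
  rw [Finset.sum_range_succ']
  have h0 : (∑ f : Fin 0 → Bool,
      c (List.ofFn f) * wmix (List.ofFn f) z (false :: w)) = 0 := by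
    simp [wmix, oneS, deltaW]
  rw [h0, add_zero]
  have hterm : ∀ n ∈ Finset.range (w.length + 1),
      (∑ f : Fin (n + 1) → Bool, c (List.ofFn f) * wmix (List.ofFn f) z (false :: w)) =
      (∑ g : Fin n → Bool, c (false :: List.ofFn g) * wmix (List.ofFn g) z w) +
      ∑ g : Fin n → Bool, c (true :: List.ofFn g) * sh w z.2 (wmix (List.ofFn g) z) := by
    intro n _
    rw [sum_fun_succ, add_comm]
    congr 1
    · apply Finset.sum_congr rfl; intro g _
      rw [ofFn_cons]
      simp [wmix, X0f]
    · apply Finset.sum_congr rfl; intro g _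
      rw [ofFn_cons]
      simp [wmix, X0f, X1f, shuffle]
  rw [Finset.sum_congr rfl hterm, Finset.sum_add_distrib]
  congr 1
  rw [sh_sum_right]
  apply Finset.sum_congr rfl; intro n _
  rw [sh_sum_right]
  apply Finset.sum_congr rfl; intro g _
  rw [sh_smul_right]

lemma mixcomp_cons_true (c : Series) (z : Series × Series) (w : Word) :
    mixcomp c z (true :: w) =
      sh w z.1 (mixcomp (fun u => c (true :: u)) z) := by
  have hzero : ∀ u : Word, u.length ≤ w.length →
      mixcomp (fun v => c (true :: v)) z u =
      ∑ n ∈ Finset.range (w.length + 1), ∑ g : Fin n → Bool,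
        c (true :: List.ofFn g) * wmix (List.ofFn g) z u := by
    intro u hu
    exact mixcomp_eq_sum _ z u w.length hu
  rw [sh_congr_right w z.1 _ _ hzero]
  show (∑ n ∈ Finset.range (w.length + 1 + 1), ∑ f : Fin n → Bool,
      c (List.ofFn f) * wmix (List.ofFn f) z (true :: w)) = _
  rw [Finset.sum_range_succ']
  have h0 : (∑ f : Fin 0 → Bool,
      c (List.ofFn f) * wmix (List.ofFn f) z (true :: w)) = 0 := by
    simp [wmix, oneS, deltaW]
  rw [h0, add_zero]
  have hterm : ∀ n ∈ Finset.range (w.length + 1),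
      (∑ f : Fin (n + 1) → Bool, c (List.ofFn f) * wmix (List.ofFn f) z (true :: w)) =
      (∑ g : Fin n → Bool, c (true :: List.ofFn g) * sh w z.1 (wmix (List.ofFn g) z)) := by
    intro n _
    rw [sum_fun_succ]
    have : (∑ g : Fin n → Bool,
        c (List.ofFn (Fin.cons false g)) * wmix (List.ofFn (Fin.cons false g)) z (true :: w)) = 0 := by
      apply Finset.sum_eq_zero; intro g _
      rw [ofFn_cons]
      simp [wmix, X0f]
    rw [this, add_zero]
    apply Finset.sum_congr rfl; intro g _
    rw [ofFn_cons]
    simp [wmix, X0f, X1f, shuffle]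
  rw [Finset.sum_congr rfl hterm]
  rw [sh_sum_right]
  apply Finset.sum_congr rfl; intro n _
  rw [sh_sum_right]
  apply Finset.sum_congr rfl; intro g _
  rw [sh_smul_right]

end MixcompStruct
section MixcompHom

lemma sh_cons (x : Bool) (w : Word) (A B : Series) :
    sh (x :: w) A B = sh w (fun u => A (x :: u)) B + sh w A (fun u => B (x :: u)) := rfl

lemma sh_add_left (w : Word) (c d e : Series) :
    sh w (c + d) e = sh w c e + sh w d e := by
  rw [sh_comm, sh_add_right, sh_comm w e c, sh_comm w e d]

lemma sh_shuffle_left_swap (w : Word) (p A B : Series) :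
    sh w p (shuffle A B) = sh w (shuffle p A) B := (sh_assoc w p A B).symm

lemma sh_mid_swap (w : Word) (p A B : Series) :
    sh w p (shuffle A B) = sh w A (shuffle p B) := by
  rw [← sh_assoc, shuffle_comm p A, sh_assoc]

lemma mixcomp_one (z : Series × Series) : mixcomp oneS z = oneS := by
  have hz : ∀ b : Bool, (fun u : Word => oneS (b :: u)) = (0 : Series) := by
    intro b; funext u; simp [oneS, deltaW]
  funext w
  cases w with
  | nil => rw [mixcomp_nil]
  | cons x w =>
      cases x
      · rw [mixcomp_cons_false, hz, hz, mixcomp_zero, sh_zero_right]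
        simp [oneS, deltaW]
      · rw [mixcomp_cons_true, hz, mixcomp_zero, sh_zero_right]
        simp [oneS, deltaW]

lemma mixcomp_X0f (c : Series) (z : Series × Series) :
    mixcomp (X0f c) z = X0f (mixcomp c z) := by
  have h0 : (fun u : Word => X0f c (false :: u)) = c := rfl
  have h1 : (fun u : Word => X0f c (true :: u)) = (0 : Series) := rfl
  funext w
  cases w with
  | nil =>
      rw [mixcomp_nil]
      simp [X0f]
  | cons x w =>
      cases x
      · rw [mixcomp_cons_false, h0, h1, mixcomp_zero, sh_zero_right, add_zero]
        rfl
      · rw [mixcomp_cons_true, h1, mixcomp_zero, sh_zero_right]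
        rfl

lemma mixcomp_X1f (c : Series) (z : Series × Series) :
    mixcomp (X1f c) z =
      X1f (shuffle z.1 (mixcomp c z)) + X0f (shuffle z.2 (mixcomp c z)) := by
  have h0 : (fun u : Word => X1f c (false :: u)) = (0 : Series) := rfl
  have h1 : (fun u : Word => X1f c (true :: u)) = c := rfl
  funext w
  cases w with
  | nil =>
      rw [mixcomp_nil]
      simp [X0f, X1f]
  | cons x w =>
      cases x
      · rw [mixcomp_cons_false, h0, h1, mixcomp_zero]
        show (0 : Series) w + sh w z.2 (mixcomp c z) = 0 + shuffle z.2 (mixcomp c z) w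
        rfl
      · rw [mixcomp_cons_true, h1]
        show sh w z.1 (mixcomp c z) = shuffle z.1 (mixcomp c z) w + 0
        rw [add_zero]; rfl

lemma mixcomp_shuffle_aux (z : Series × Series) :
    ∀ N : ℕ, ∀ w : Word, w.length ≤ N → ∀ a b : Series,
      mixcomp (shuffle a b) z w = sh w (mixcomp a z) (mixcomp b z) := by
  intro N
  induction N with
  | zero =>
      intro w hw a b
      cases w with
      | nil =>
          rw [mixcomp_nil,
            show sh [] (mixcomp a z) (mixcomp b z)
              = mixcomp a z [] * mixcomp b z [] from rfl,
            mixcomp_nil, mixcomp_nil]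
          rfl
      | cons x w => simp at hw
  | succ N ih =>
      intro w hw a b
      cases w with
      | nil =>
          rw [mixcomp_nil,
            show sh [] (mixcomp a z) (mixcomp b z)
              = mixcomp a z [] * mixcomp b z [] from rfl,
            mixcomp_nil, mixcomp_nil]
          rfl
      | cons x w =>
          have hw' : w.length ≤ N := by simpa using hw
          have hD0 : (fun u => shuffle a b (false :: u))
              = shuffle (fun v => a (false :: v)) b
                + shuffle a (fun v => b (false :: v)) := rfl
          have hD1 : (fun u => shuffle a b (true :: u))
              = shuffle (fun v => a (true :: v)) b
                + shuffle a (fun v => b (true :: v)) := rfl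
          have key : ∀ p q : Series, sh w p (mixcomp (shuffle q b) z)
              = sh w p (shuffle (mixcomp q z) (mixcomp b z)) := by
            intro p q
            apply sh_congr_right
            intro u hu
            exact ih u (le_trans hu hw') q b
          have key' : ∀ p q : Series, sh w p (mixcomp (shuffle a q) z)
              = sh w p (shuffle (mixcomp a z) (mixcomp q z)) := by
            intro p q
            apply sh_congr_right
            intro u hu
            exact ih u (le_trans hu hw') a q
          have ea0 : (fun u => mixcomp a z (false :: u))
              = mixcomp (fun v => a (false :: v)) z
                + shuffle z.2 (mixcomp (fun v => a (true :: v)) z) := by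
            funext u; rw [mixcomp_cons_false]; rfl
          have eb0 : (fun u => mixcomp b z (false :: u))
              = mixcomp (fun v => b (false :: v)) z
                + shuffle z.2 (mixcomp (fun v => b (true :: v)) z) := by
            funext u; rw [mixcomp_cons_false]; rfl
          have ea1 : (fun u => mixcomp a z (true :: u))
              = shuffle z.1 (mixcomp (fun v => a (true :: v)) z) := by
            funext u; rw [mixcomp_cons_true]; rfl
          have eb1 : (fun u => mixcomp b z (true :: u))
              = shuffle z.1 (mixcomp (fun v => b (true :: v)) z) := by
            funext u; rw [mixcomp_cons_true]; rfl
          cases x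
          · rw [mixcomp_cons_false, hD0, hD1, mixcomp_add, mixcomp_add,
              sh_add_right, key, key',
              sh_shuffle_left_swap, sh_mid_swap,
              Pi.add_apply, ih w hw' (fun v => a (false :: v)) b,
              ih w hw' a (fun v => b (false :: v)),
              sh_cons, ea0, eb0, sh_add_left, sh_add_right]
            ring
          · rw [mixcomp_cons_true, hD1, mixcomp_add, sh_add_right, key, key',
              sh_shuffle_left_swap, sh_mid_swap,
              sh_cons, ea1, eb1]

lemma mixcomp_shuffle (a b : Series) (z : Series × Series) :
    mixcomp (shuffle a b) z = shuffle (mixcomp a z) (mixcomp b z) := by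
  funext w
  exact mixcomp_shuffle_aux z w.length w le_rfl a b

end MixcompHom
section Final

lemma X0f_add (a b : Series) : X0f (a + b) = X0f a + X0f b := by
  funext w
  cases w with
  | nil => simp [X0f]
  | cons x w => cases x <;> simp [X0f]

lemma shuffle_add_left (a b c : Series) :
    shuffle (a + b) c = shuffle a c + shuffle b c := by
  funext w
  exact sh_add_left w a b c

lemma mixcomp_wmix (d h : Series × Series) (η : Word) :
    mixcomp (wmix η d) h = wmix η (gmul (triOp d h) h) := by
  induction η with
  | nil => exact mixcomp_one h
  | cons b η ih =>
      cases b
      · show mixcomp (X0f (wmix η d)) h = X0f (wmix η (gmul (triOp d h) h))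
        rw [mixcomp_X0f, ih]
      · show mixcomp (X1f (shuffle d.1 (wmix η d)) + X0f (shuffle d.2 (wmix η d))) h
            = X1f (shuffle (gmul (triOp d h) h).1 (wmix η (gmul (triOp d h) h)))
              + X0f (shuffle (gmul (triOp d h) h).2 (wmix η (gmul (triOp d h) h)))
        rw [mixcomp_add, mixcomp_X1f, mixcomp_X0f, mixcomp_shuffle, mixcomp_shuffle, ih]
        show _ = X1f (shuffle (shuffle (mixcomp d.1 h) h.1) (wmix η (gmul (triOp d h) h)))
              + X0f (shuffle (mixcomp d.2 h + shuffle (mixcomp d.1 h) h.2)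
                  (wmix η (gmul (triOp d h) h)))
        rw [shuffle_add_left, X0f_add,
          show shuffle (shuffle (mixcomp d.1 h) h.1) (wmix η (gmul (triOp d h) h))
              = shuffle h.1 (shuffle (mixcomp d.1 h) (wmix η (gmul (triOp d h) h)))
            from by rw [shuffle_comm (mixcomp d.1 h) h.1, shuffle_assoc],
          show shuffle (shuffle (mixcomp d.1 h) h.2) (wmix η (gmul (triOp d h) h))
              = shuffle h.2 (shuffle (mixcomp d.1 h) (wmix η (gmul (triOp d h) h)))
            from by rw [shuffle_comm (mixcomp d.1 h) h.2, shuffle_assoc]]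
        abel

lemma mixcomp_assoc (c : Series) (d h : Series × Series) :
    mixcomp (mixcomp c d) h = mixcomp c (gmul (triOp d h) h) := by
  funext w
  show (∑ n ∈ Finset.range (w.length + 1), ∑ f : Fin n → Bool,
      mixcomp c d (List.ofFn f) * wmix (List.ofFn f) h w) = _
  have step1 : ∀ n ∈ Finset.range (w.length + 1), ∀ f : Fin n → Bool,
      mixcomp c d (List.ofFn f) = ∑ m ∈ Finset.range (w.length + 1),
        ∑ g : Fin m → Bool, c (List.ofFn g) * wmix (List.ofFn g) d (List.ofFn f) := by
    intro n hn f
    apply mixcomp_eq_sum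
    simp only [Finset.mem_range] at hn
    simp only [List.length_ofFn]
    omega
  calc (∑ n ∈ Finset.range (w.length + 1), ∑ f : Fin n → Bool,
        mixcomp c d (List.ofFn f) * wmix (List.ofFn f) h w)
      = ∑ n ∈ Finset.range (w.length + 1), ∑ f : Fin n → Bool,
          ∑ m ∈ Finset.range (w.length + 1), ∑ g : Fin m → Bool,
            c (List.ofFn g) * wmix (List.ofFn g) d (List.ofFn f)
              * wmix (List.ofFn f) h w := by
        apply Finset.sum_congr rfl; intro n hn
        apply Finset.sum_congr rfl; intro f _
        rw [step1 n hn f, Finset.sum_mul]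
        apply Finset.sum_congr rfl; intro m _
        rw [Finset.sum_mul]
    _ = ∑ n ∈ Finset.range (w.length + 1), ∑ m ∈ Finset.range (w.length + 1),
          ∑ f : Fin n → Bool, ∑ g : Fin m → Bool,
            c (List.ofFn g) * wmix (List.ofFn g) d (List.ofFn f)
              * wmix (List.ofFn f) h w := by
        apply Finset.sum_congr rfl; intro n _
        exact Finset.sum_comm
    _ = ∑ m ∈ Finset.range (w.length + 1), ∑ n ∈ Finset.range (w.length + 1),
          ∑ f : Fin n → Bool, ∑ g : Fin m → Bool,
            c (List.ofFn g) * wmix (List.ofFn g) d (List.ofFn f)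
              * wmix (List.ofFn f) h w := Finset.sum_comm
    _ = ∑ m ∈ Finset.range (w.length + 1), ∑ g : Fin m → Bool,
          ∑ n ∈ Finset.range (w.length + 1), ∑ f : Fin n → Bool,
            c (List.ofFn g) * wmix (List.ofFn g) d (List.ofFn f)
              * wmix (List.ofFn f) h w := by
        apply Finset.sum_congr rfl; intro m _
        rw [← Finset.sum_comm]
        apply Finset.sum_congr rfl; intro n _
        exact Finset.sum_comm
    _ = ∑ m ∈ Finset.range (w.length + 1), ∑ g : Fin m → Bool,
          c (List.ofFn g) * mixcomp (wmix (List.ofFn g) d) h w := by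
        apply Finset.sum_congr rfl; intro m _
        apply Finset.sum_congr rfl; intro g _
        show _ = c (List.ofFn g) * ∑ n ∈ Finset.range (w.length + 1),
          ∑ f : Fin n → Bool, wmix (List.ofFn g) d (List.ofFn f) * wmix (List.ofFn f) h w
        rw [Finset.mul_sum]
        apply Finset.sum_congr rfl; intro n _
        rw [Finset.mul_sum]
        apply Finset.sum_congr rfl; intro f _
        ring
    _ = ∑ m ∈ Finset.range (w.length + 1), ∑ g : Fin m → Bool,
          c (List.ofFn g) * wmix (List.ofFn g) (gmul (triOp d h) h) w := by
        apply Finset.sum_congr rfl; intro m _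
        apply Finset.sum_congr rfl; intro g _
        rw [mixcomp_wmix]

end Final

/-- for c, d, h ∈ G, (c ◁ d) ◁ h = c ◁ ((d ◁ h) · h);
equivalently R_h ∘ R_d = R_{d ⋆ h} for the Grossman–Larson product
d ⋆ h = (d ◁ h) · h. -/
theorem tri_weighted_assoc (c d h : Series × Series)
    (hc : c.1 [] = 1) (hd : d.1 [] = 1) (hh : h.1 [] = 1) :
    triOp (triOp c d) h = triOp c (gmul (triOp d h) h) ∧
    triOp (triOp c d) h = triOp c (starOp d h) := by
  have h1 : triOp (triOp c d) h = triOp c (gmul (triOp d h) h) := by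
    show (mixcomp (mixcomp c.1 d) h, mixcomp (mixcomp c.2 d) h) = _
    rw [mixcomp_assoc, mixcomp_assoc]
    rfl
  exact ⟨h1, h1⟩
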